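/- Let X be a real Banach space, I = [0,a] with a > 0, μ a convex MNC on X, and B a nonempty subset of C(I,X) that is bounded in the supremum norm. Then there exists a constant L_B > 0 such that |μ(B(t)) − μ(B(s))| ≤ L_B · ω(B, |t − s|) for all t, s ∈ I, where B(t) = {x(t) : x ∈ B} and ω(B,ε) = sup{‖x(t) − x(s)‖ : x ∈ B, t, s ∈ I, |t − s| ≤ ε}. In particular, if B is equicontinuous, then t ↦ μ(B(t)) is continuous on I. -/

import Mathlib

open Set Bornology Pointwise

/-- A convex measure of noncompactness (convex MNC) on a real Banach space `X`. -/
structure IsConvexMNC (X : Type*) [NormedAddCommGroup X] [NormedSpace ℝ X]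
    (μ : Set X → ℝ) : Prop where
  nonneg : ∀ B : Set X, B.Nonempty → IsBounded B → 0 ≤ μ B
  eq_zero_iff : ∀ B : Set X, B.Nonempty → IsBounded B →
    (μ B = 0 ↔ IsCompact (closure B))
  mono : ∀ A B : Set X, B.Nonempty → IsBounded A → B ⊆ A → μ B ≤ μ A
  convexHull_inv : ∀ B : Set X, B.Nonempty → IsBounded B → μ (convexHull ℝ B) = μ B
  convex : ∀ A B : Set X, A.Nonempty → B.Nonempty → IsBounded A → IsBounded B →
    ∀ l : ℝ, 0 ≤ l → l ≤ 1 → μ (l • A + (1 - l) • B) ≤ l * μ A + (1 - l) * μ B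

/-- The modulus of continuity `ω(B, ε)` of a family `B` of functions `[0,a] → X`. -/
noncomputable def modulus {X : Type*} [NormedAddCommGroup X]
    (a : ℝ) (B : Set (ℝ → X)) (ε : ℝ) : ℝ :=
  sSup {d : ℝ | ∃ x ∈ B, ∃ t ∈ Icc (0 : ℝ) a, ∃ s ∈ Icc (0 : ℝ) a,
    |t - s| ≤ ε ∧ d = ‖x t - x s‖}

/-- Key estimate: if every point of `A` is within `min r (2M)` of a point of `C`,
both sets inside the ball of radius `M`, then `μ A - μ C ≤ r * (μ D / (2M+1))`
where `D` is the ball of radius `3M+1`. -/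
lemma IsConvexMNC.sub_le_of_close {X : Type*} [NormedAddCommGroup X] [NormedSpace ℝ X]
    (μ : Set X → ℝ) (hμ : IsConvexMNC X μ) (M : ℝ) (hM : 1 ≤ M)
    (A C : Set X) (hAne : A.Nonempty) (hCne : C.Nonempty)
    (hA : A ⊆ Metric.closedBall 0 M) (hC : C ⊆ Metric.closedBall 0 M)
    (r : ℝ) (hr : 0 ≤ r)
    (hclose : ∀ x ∈ A, ∃ c ∈ C, ‖x - c‖ ≤ min r (2 * M)) :
    μ A - μ C ≤ r * (μ (Metric.closedBall (0 : X) (3 * M + 1)) / (2 * M + 1)) := by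
  have hCb : IsBounded C := Metric.isBounded_closedBall.subset hC
  have hDb : IsBounded (Metric.closedBall (0 : X) (3 * M + 1)) := Metric.isBounded_closedBall
  have hDne : (Metric.closedBall (0 : X) (3 * M + 1)).Nonempty :=
    ⟨0, by simp; linarith⟩
  have hμD : 0 ≤ μ (Metric.closedBall (0 : X) (3 * M + 1)) := hμ.nonneg _ hDne hDb
  have hμC : 0 ≤ μ C := hμ.nonneg _ hCne hCb
  rcases eq_or_lt_of_le hr with hr0 | hr0
  · -- r = 0 : A ⊆ C
    have hAC : A ⊆ C := by
      intro x hx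
      obtain ⟨c, hc, hxc⟩ := hclose x hx
      have h0 : ‖x - c‖ ≤ 0 := le_trans hxc (by rw [← hr0]; exact min_le_left _ _)
      have hxc' : x = c := by
        have := le_antisymm h0 (norm_nonneg _)
        rwa [norm_sub_eq_zero_iff] at this
      rwa [hxc']
    have := hμ.mono C A hAne hCb hAC
    rw [← hr0, zero_mul]
    linarith
  · set r' : ℝ := min r (2 * M) with hr'def
    have hr'pos : 0 < r' := lt_min hr0 (by linarith)
    have hr'le : r' ≤ 2 * M := min_le_right _ _
    set l : ℝ := r' / (2 * M + 1) with hldef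
    have hlpos : 0 < l := div_pos hr'pos (by linarith)
    have hlle : l ≤ 1 := by
      rw [hldef, div_le_one (by linarith)]; linarith
    set D : Set X := Metric.closedBall (0 : X) (3 * M + 1) with hDdef
    have hsub : A ⊆ (1 - l) • C + l • D := by
      intro x hx
      obtain ⟨c, hc, hxc⟩ := hclose x hx
      refine ⟨(1 - l) • c, smul_mem_smul_set hc, l • (c + l⁻¹ • (x - c)), ?_, ?_⟩
      · refine smul_mem_smul_set ?_
        rw [hDdef, Metric.mem_closedBall, dist_zero_right]
        have h1 : ‖c‖ ≤ M := by
          have := hC hc; rwa [Metric.mem_closedBall, dist_zero_right] at this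
        have h2 : ‖l⁻¹ • (x - c)‖ ≤ 2 * M + 1 := by
          rw [norm_smul, norm_inv, Real.norm_eq_abs, abs_of_pos hlpos]
          have hli : l⁻¹ = (2 * M + 1) / r' := by
            rw [hldef]; field_simp
          rw [hli]
          calc (2 * M + 1) / r' * ‖x - c‖ ≤ (2 * M + 1) / r' * r' := by
                apply mul_le_mul_of_nonneg_left hxc
                positivity
            _ = 2 * M + 1 := by field_simp
        calc ‖c + l⁻¹ • (x - c)‖ ≤ ‖c‖ + ‖l⁻¹ • (x - c)‖ := norm_add_le _ _
          _ ≤ M + (2 * M + 1) := add_le_add h1 h2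
          _ = 3 * M + 1 := by ring
      · rw [smul_add, smul_smul, mul_inv_cancel₀ (ne_of_gt hlpos), one_smul]
        module
    have hbig : IsBounded ((1 - l) • C + l • D) :=
      (hCb.smul₀ (1 - l)).add (hDb.smul₀ l)
    have h1 : μ A ≤ μ ((1 - l) • C + l • D) := hμ.mono _ _ hAne hbig hsub
    have h2 : μ ((1 - l) • C + (1 - (1 - l)) • D) ≤ (1 - l) * μ C + (1 - (1 - l)) * μ D :=
      hμ.convex C D hCne hDne hCb hDb (1 - l) (by linarith) (by linarith)
    rw [show (1 : ℝ) - (1 - l) = l by ring] at h2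
    have h3 : μ A ≤ (1 - l) * μ C + l * μ D := le_trans h1 h2
    have h4 : l * μ D ≤ r / (2 * M + 1) * μ D := by
      apply mul_le_mul_of_nonneg_right _ hμD
      rw [hldef]
      gcongr
      exact min_le_left _ _
    rw [show r * (μ D / (2 * M + 1)) = r / (2 * M + 1) * μ D by ring]
    nlinarith [mul_nonneg hlpos.le hμC]

/-- For a nonempty, uniformly bounded family `B ⊆ C([0,a],X)` and a convex MNC `μ`, the
function `t ↦ μ(B(t))` satisfies `|μ(B(t)) − μ(B(s))| ≤ L_B · ω(B, |t − s|)` for some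
constant `L_B > 0`; in particular it is continuous whenever `B` is equicontinuous. -/
theorem convexMNC_section_lipschitz_modulus {X : Type*} [NormedAddCommGroup X]
    [NormedSpace ℝ X] [CompleteSpace X] (μ : Set X → ℝ) (hμ : IsConvexMNC X μ)
    (a : ℝ) (ha : 0 < a) (B : Set (ℝ → X)) (hBne : B.Nonempty)
    (hBcont : ∀ x ∈ B, ContinuousOn x (Icc 0 a))
    (hBbdd : ∃ M : ℝ, ∀ x ∈ B, ∀ t ∈ Icc (0 : ℝ) a, ‖x t‖ ≤ M) :
    (∃ L : ℝ, 0 < L ∧ ∀ t ∈ Icc (0 : ℝ) a, ∀ s ∈ Icc (0 : ℝ) a,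
      |μ ((fun x : ℝ → X => x t) '' B) - μ ((fun x : ℝ → X => x s) '' B)| ≤
        L * modulus a B (|t - s|)) ∧
    ((∀ ε : ℝ, 0 < ε → ∀ t₀ ∈ Icc (0 : ℝ) a, ∃ δ : ℝ, 0 < δ ∧
        ∀ x ∈ B, ∀ t ∈ Icc (0 : ℝ) a, |t - t₀| < δ → ‖x t - x t₀‖ ≤ ε) →
      ContinuousOn (fun t => μ ((fun x : ℝ → X => x t) '' B)) (Icc 0 a)) := by
  classical
  obtain ⟨M₀, hM₀⟩ := hBbdd
  set M : ℝ := max M₀ 1 with hMdef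
  have hM1 : (1 : ℝ) ≤ M := le_max_right _ _
  have hM : ∀ x ∈ B, ∀ t ∈ Icc (0 : ℝ) a, ‖x t‖ ≤ M :=
    fun x hx t ht => (hM₀ x hx t ht).trans (le_max_left _ _)
  -- the section sets
  set F : ℝ → Set X := fun t => (fun x : ℝ → X => x t) '' B with hFdef
  have hFne : ∀ t, (F t).Nonempty := fun t => hBne.image _
  have hFsub : ∀ t ∈ Icc (0 : ℝ) a, F t ⊆ Metric.closedBall 0 M := by
    rintro t ht _ ⟨x, hx, rfl⟩
    rw [Metric.mem_closedBall, dist_zero_right]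
    exact hM x hx t ht
  set D : Set X := Metric.closedBall (0 : X) (3 * M + 1) with hDdef
  set Cst : ℝ := μ D / (2 * M + 1) with hCdef
  have hCnn : 0 ≤ Cst := by
    have hDne : D.Nonempty := ⟨0, by simp [hDdef]; linarith⟩
    have := hμ.nonneg D hDne Metric.isBounded_closedBall
    positivity
  set L : ℝ := Cst + 1 with hLdef
  have hLpos : 0 < L := by positivity
  -- the key two-sided estimate
  have key : ∀ t ∈ Icc (0 : ℝ) a, ∀ s ∈ Icc (0 : ℝ) a, ∀ r : ℝ, 0 ≤ r →
      (∀ x ∈ B, ‖x t - x s‖ ≤ r) → |μ (F t) - μ (F s)| ≤ r * Cst := by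
    intro t ht s hs r hr hrb
    rw [abs_le]
    have hb : ∀ x ∈ B, ‖x t - x s‖ ≤ min r (2 * M) := by
      intro x hx
      refine le_min (hrb x hx) ?_
      calc ‖x t - x s‖ ≤ ‖x t‖ + ‖x s‖ := norm_sub_le _ _
        _ ≤ M + M := add_le_add (hM x hx t ht) (hM x hx s hs)
        _ = 2 * M := by ring
    constructor
    · have := IsConvexMNC.sub_le_of_close μ hμ M hM1 (F s) (F t) (hFne s) (hFne t)
        (hFsub s hs) (hFsub t ht) r hr ?_
      · linarith
      · rintro _ ⟨x, hx, rfl⟩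
        exact ⟨x t, ⟨x, hx, rfl⟩, by rw [norm_sub_rev]; exact hb x hx⟩
    · have := IsConvexMNC.sub_le_of_close μ hμ M hM1 (F t) (F s) (hFne t) (hFne s)
        (hFsub t ht) (hFsub s hs) r hr ?_
      · linarith
      · rintro _ ⟨x, hx, rfl⟩
        exact ⟨x s, ⟨x, hx, rfl⟩, hb x hx⟩
  obtain ⟨x₀, hx₀⟩ := hBne
  have h0a : (0 : ℝ) ∈ Icc (0 : ℝ) a := ⟨le_refl _, ha.le⟩
  -- basic facts about the modulus
  have hmodmem : ∀ ε : ℝ, 0 ≤ ε → ∀ x ∈ B, ∀ t ∈ Icc (0 : ℝ) a, ∀ s ∈ Icc (0 : ℝ) a,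
      |t - s| ≤ ε → ‖x t - x s‖ ≤ modulus a B ε := by
    intro ε hε x hx t ht s hs hts
    apply le_csSup
    · refine ⟨2 * M, ?_⟩
      rintro d ⟨y, hy, t', ht', s', hs', _, rfl⟩
      calc ‖y t' - y s'‖ ≤ ‖y t'‖ + ‖y s'‖ := norm_sub_le _ _
        _ ≤ M + M := add_le_add (hM y hy t' ht') (hM y hy s' hs')
        _ = 2 * M := by ring
    · exact ⟨x, hx, t, ht, s, hs, hts, rfl⟩
  have hmodnn : ∀ ε : ℝ, 0 ≤ ε → 0 ≤ modulus a B ε := by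
    intro ε hε
    have := hmodmem ε hε x₀ hx₀ 0 h0a 0 h0a (by simp [hε])
    exact le_trans (norm_nonneg _) this
  constructor
  · refine ⟨L, hLpos, ?_⟩
    intro t ht s hs
    set ω : ℝ := modulus a B (|t - s|) with hωdef
    have hωnn : 0 ≤ ω := hmodnn _ (abs_nonneg _)
    have h := key t ht s hs ω hωnn
      (fun x hx => hmodmem _ (abs_nonneg _) x hx t ht s hs le_rfl)
    calc |μ (F t) - μ (F s)| ≤ ω * Cst := h
      _ ≤ ω * L := by apply mul_le_mul_of_nonneg_left _ hωnn; rw [hLdef]; linarith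
      _ = L * ω := mul_comm _ _
  · intro hequi
    rw [Metric.continuousOn_iff]
    intro t₀ ht₀ ε hε
    set ε' : ℝ := ε / (2 * (Cst + 1)) with hε'def
    have hε'pos : 0 < ε' := by positivity
    obtain ⟨δ, hδpos, hδ⟩ := hequi ε' hε'pos t₀ ht₀
    refine ⟨δ, hδpos, ?_⟩
    intro t ht htδ
    rw [Real.dist_eq] at htδ ⊢
    have h := key t ht t₀ ht₀ ε' hε'pos.le (fun x hx => hδ x hx t ht htδ)
    calc |μ (F t) - μ (F t₀)| ≤ ε' * Cst := h
      _ ≤ ε' * (Cst + 1) := by nlinarith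
      _ = ε / 2 := by rw [hε'def]; field_simp
      _ < ε := by linarith
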